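/- arXiv:0708.0465 — 2 statements merged into one kernel-verified Lean document; each statement's English description precedes it below -/
import Mathlib

section
/- Let f : ℝⁿ → ℝ be C² and let Ω be the open set of points x that are regular points of f and at which the Weingarten map d_xν_f|_{T_x f⁻¹(f(x))} is invertible. Define Ψ_f : Ω → S^{n−1} × ℝ by Ψ_f(x) = (ν_f(x), f(x)), where ν_f = ∇f/|∇f|. Then Ψ_f is a local diffeomorphism at every point of Ω; in particular Ψ_f(Ω) is open in S^{n−1} × ℝ. -/
open scoped RealInnerProductSpace
open Set Metric

section Aux

variable {E : Type*} [NormedAddCommGroup E] [InnerProductSpace ℝ E] [FiniteDimensional ℝ E]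

theorem aux_grad_contDiff (f : E → ℝ) (hf : ContDiff ℝ 2 f) : ContDiff ℝ 1 (gradient f) := by
  have h1 : ContDiff ℝ 1 (fderiv ℝ f) := hf.fderiv_right (by norm_num)
  let d : StrongDual ℝ E →L[ℝ] E :=
    { toFun := fun L => (InnerProductSpace.toDual ℝ E).symm L
      map_add' := by intros; simp
      map_smul' := by intros; simp
      cont := (InnerProductSpace.toDual ℝ E).symm.continuous }
  have hde : gradient f = fun y => d (fderiv ℝ f y) := rfl
  rw [hde]
  exact d.contDiff.comp h1

theorem aux_main (f : E → ℝ) (hf : ContDiff ℝ 2 f)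
    (ν : E → E) (hν : ∀ y, ν y = ‖gradient f y‖⁻¹ • gradient f y)
    (Ψ : E → E × ℝ) (hΨ : ∀ y, Ψ y = (ν y, f y))
    (Ω : Set E)
    (hΩ : Ω = {x | gradient f x ≠ 0 ∧
      ∀ ξ : E, ⟪ξ, gradient f x⟫ = 0 → (fderiv ℝ ν x) ξ = 0 → ξ = 0}) :
    IsOpen Ω ∧
    (∀ x ∈ Ω, ∃ V : Set E,
      IsOpen V ∧ x ∈ V ∧ V ⊆ Ω ∧ Set.InjOn Ψ V ∧
      IsOpen {p : sphere (0 : E) 1 × ℝ | ((p.1 : E), p.2) ∈ Ψ '' V} ∧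
      ∃ ψ : E × ℝ → E, ContDiffOn ℝ 1 ψ (Ψ '' V) ∧ ∀ y ∈ V, ψ (Ψ y) = y) ∧
    IsOpen {p : sphere (0 : E) 1 × ℝ | ((p.1 : E), p.2) ∈ Ψ '' Ω} := by
  classical
  have hg1 : ContDiff ℝ 1 (gradient f) := aux_grad_contDiff f hf
  set U : Set E := {x | gradient f x ≠ 0} with hU_def
  have hU : IsOpen U := by
    have h : U = gradient f ⁻¹' ({0}ᶜ) := rfl
    rw [h]; exact isOpen_compl_singleton.preimage hg1.continuous
  have hΩU : Ω ⊆ U := by intro y hy; exact (hΩ ▸ hy).1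
  have hνc : ∀ x ∈ U, ContDiffAt ℝ 1 ν x := by
    intro x hx
    have hgx : gradient f x ≠ 0 := hx
    have h1 : ContDiffAt ℝ 1 (fun y => ‖gradient f y‖⁻¹ • gradient f y) x :=
      ((hg1.contDiffAt.norm ℝ hgx).inv (norm_ne_zero_iff.mpr hgx)).smul hg1.contDiffAt
    exact h1.congr_of_eventuallyEq (Filter.Eventually.of_forall fun y => (hν y))
  have hν_norm : ∀ x ∈ U, ‖ν x‖ = 1 := by
    intro x hx
    rw [hν x, norm_smul, norm_inv, norm_norm,
      inv_mul_cancel₀ (norm_ne_zero_iff.mpr (show gradient f x ≠ 0 from hx))]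
  have hν_inner : ∀ x ∈ U, (⟪ν x, ν x⟫ : ℝ) = 1 := by
    intro x hx
    rw [real_inner_self_eq_norm_mul_norm, hν_norm x hx]; norm_num
  have horth : ∀ x ∈ U, ∀ ξ : E, ⟪(fderiv ℝ ν x) ξ, ν x⟫ = (0 : ℝ) := by
    intro x hx ξ
    have hdν : HasFDerivAt ν (fderiv ℝ ν x) x := ((hνc x hx).differentiableAt one_ne_zero).hasFDerivAt
    have hinner : HasFDerivAt (fun y => (⟪ν y, ν y⟫ : ℝ))
        ((fderivInnerCLM ℝ (ν x, ν x)).comp ((fderiv ℝ ν x).prod (fderiv ℝ ν x))) x :=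
      hdν.inner ℝ hdν
    have hconst : (fun _ : E => (1 : ℝ)) =ᶠ[nhds x] (fun y => (⟪ν y, ν y⟫ : ℝ)) :=
      Filter.eventually_of_mem (hU.mem_nhds hx) fun y hy => (hν_inner y hy).symm
    have h0 : HasFDerivAt (fun _ : E => (1 : ℝ))
        ((fderivInnerCLM ℝ (ν x, ν x)).comp ((fderiv ℝ ν x).prod (fderiv ℝ ν x))) x :=
      hinner.congr_of_eventuallyEq hconst
    have hzero := h0.unique (hasFDerivAt_const 1 x)
    have h2 := ContinuousLinearMap.ext_iff.mp hzero ξ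
    simp only [ContinuousLinearMap.comp_apply, ContinuousLinearMap.prod_apply,
      fderivInnerCLM_apply, ContinuousLinearMap.zero_apply] at h2
    have h3 := real_inner_comm (ν x) ((fderiv ℝ ν x) ξ)
    linarith
  have hfd : ∀ (x : E) (ξ : E), fderiv ℝ f x ξ = ⟪gradient f x, ξ⟫ := by
    intro x ξ
    simp [gradient, InnerProductSpace.toDual_symm_apply]
  -- the auxiliary map
  set Φ : E × ℝ → E × ℝ := fun p => ((1 + p.2) • ν p.1, f p.1) with hΦ_def
  set A : E → (E × ℝ) →L[ℝ] (E × ℝ) := fun y =>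
    ((fderiv ℝ ν y).comp (ContinuousLinearMap.fst ℝ E ℝ) +
      (ContinuousLinearMap.snd ℝ E ℝ).smulRight (ν y)).prod
      ((fderiv ℝ f y).comp (ContinuousLinearMap.fst ℝ E ℝ)) with hA_def
  have hA_apply : ∀ (y : E) (ξ : E) (s : ℝ),
      A y (ξ, s) = (fderiv ℝ ν y ξ + s • ν y, fderiv ℝ f y ξ) := by
    intro y ξ s
    simp [hA_def]
  have hΦderiv : ∀ y ∈ U, HasFDerivAt Φ (A y) (y, (0:ℝ)) := by
    intro y hy
    have hdν : HasFDerivAt ν (fderiv ℝ ν y) y := ((hνc y hy).differentiableAt one_ne_zero).hasFDerivAt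
    have h1 : HasFDerivAt (fun p : E × ℝ => ν p.1)
        ((fderiv ℝ ν y).comp (ContinuousLinearMap.fst ℝ E ℝ)) (y, 0) :=
      hdν.comp (y, (0:ℝ)) hasFDerivAt_fst
    have h2 : HasFDerivAt (fun p : E × ℝ => (1 : ℝ) + p.2)
        (ContinuousLinearMap.snd ℝ E ℝ) (y, 0) := by
      have := (hasFDerivAt_const (1:ℝ) ((y, (0:ℝ)) : E × ℝ)).add
        (hasFDerivAt_snd : HasFDerivAt _ (ContinuousLinearMap.snd ℝ E ℝ) _)
      exact (hasFDerivAt_snd : HasFDerivAt (fun p : E × ℝ => p.2) (ContinuousLinearMap.snd ℝ E ℝ) (y, (0:ℝ))).const_add 1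
    have h3 := h2.smul h1
    have h4 : HasFDerivAt (fun p : E × ℝ => f p.1)
        ((fderiv ℝ f y).comp (ContinuousLinearMap.fst ℝ E ℝ)) (y, 0) :=
      (hf.differentiable (by norm_num) y).hasFDerivAt.comp (y, (0:ℝ)) hasFDerivAt_fst
    have h5 := HasFDerivAt.prodMk h3 h4
    have he : A y = ((1 + ((y, (0:ℝ)) : E × ℝ).2) •
        ((fderiv ℝ ν y).comp (ContinuousLinearMap.fst ℝ E ℝ)) +
        (ContinuousLinearMap.snd ℝ E ℝ).smulRight (ν ((y, (0:ℝ)) : E × ℝ).1)).prod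
        ((fderiv ℝ f y).comp (ContinuousLinearMap.fst ℝ E ℝ)) := by
      rw [hA_def]
      norm_num
    rw [he]
    exact h5
  -- smoothness of Φ
  have hΦ_cd : ContDiffOn ℝ 1 Φ (U ×ˢ (univ : Set ℝ)) := by
    intro p hp
    have h1 : ContDiffAt ℝ 1 (fun p : E × ℝ => (1 + p.2) • ν p.1) p :=
      (contDiffAt_const.add contDiffAt_snd).smul ((hνc p.1 hp.1).comp p contDiffAt_fst)
    have h2 : ContDiffAt ℝ 1 (fun p : E × ℝ => f p.1) p :=
      ((hf.of_le (by norm_num)).contDiffAt).comp p contDiffAt_fst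
    exact (h1.prodMk h2).contDiffWithinAt
  have hUuniv : IsOpen (U ×ˢ (univ : Set ℝ)) := hU.prod isOpen_univ
  -- equivalence with invertibility
  have hmem_iff : ∀ y ∈ U, (y ∈ Ω ↔ IsUnit (A y)) := by
    intro y hy
    rw [ContinuousLinearMap.isUnit_iff_bijective]
    constructor
    · intro hyΩ
      have hinj : Function.Injective (A y) := by
        rw [injective_iff_map_eq_zero]
        rintro ⟨ξ, s⟩ hp
        rw [hA_apply, show (0 : E × ℝ) = ((0 : E), (0 : ℝ)) from rfl, Prod.mk.injEq] at hp
        obtain ⟨h1, h2⟩ := hp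
        have h3 : ⟪fderiv ℝ ν y ξ + s • ν y, ν y⟫ = (0 : ℝ) := by rw [h1]; simp
        rw [inner_add_left, real_inner_smul_left, horth y hy, hν_inner y hy] at h3
        have hs : s = 0 := by linarith
        have h4 : fderiv ℝ ν y ξ = 0 := by rw [hs] at h1; simpa using h1
        have h5 : ⟪ξ, gradient f y⟫ = (0 : ℝ) := by
          rw [real_inner_comm, ← hfd]; exact h2
        have h6 : ξ = 0 := (hΩ ▸ hyΩ).2 ξ h5 h4
        simp [Prod.ext_iff, h6, hs]
      exact ⟨hinj, LinearMap.injective_iff_surjective.mp hinj⟩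
    · intro hbij
      rw [hΩ]
      refine ⟨hy, fun ξ hξ1 hξ2 => ?_⟩
      have h1 : A y (ξ, 0) = 0 := by
        rw [hA_apply, hξ2, hfd, real_inner_comm, hξ1]
        simp
      have h0 : (ξ, (0:ℝ)) = 0 := hbij.injective (by rw [h1, map_zero])
      exact congrArg Prod.fst h0
  -- openness of Ω
  have hMA : ∀ y ∈ U, fderiv ℝ Φ (y, (0:ℝ)) = A y := fun y hy => (hΦderiv y hy).fderiv
  have hM_cont : ContinuousOn (fun y => fderiv ℝ Φ (y, (0:ℝ))) U := by
    have h1 : ContinuousOn (fderiv ℝ Φ) (U ×ˢ (univ : Set ℝ)) :=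
      hΦ_cd.continuousOn_fderiv_of_isOpen hUuniv le_rfl
    exact h1.comp (Continuous.continuousOn (continuous_id.prodMk continuous_const))
      (fun y hy => ⟨hy, mem_univ _⟩)
  have hΩ_eq : Ω = U ∩ (fun y => fderiv ℝ Φ (y, (0:ℝ))) ⁻¹' {T | IsUnit T} := by
    ext y
    constructor
    · intro hy
      have hyU : y ∈ U := hΩU hy
      refine ⟨hyU, ?_⟩
      simp only [mem_preimage, mem_setOf_eq, hMA y hyU]
      exact (hmem_iff y hyU).mp hy
    · rintro ⟨hyU, hy2⟩
      refine (hmem_iff y hyU).mpr ?_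
      rwa [mem_preimage, mem_setOf_eq, hMA y hyU] at hy2
  have hΩ_open : IsOpen Ω := by
    rw [hΩ_eq]
    exact hM_cont.isOpen_inter_preimage hU (Units.isOpen (R := (E × ℝ) →L[ℝ] (E × ℝ)))
  have hΨΦ : ∀ y, Ψ y = Φ (y, 0) := by
    intro y
    rw [hΨ y, hΦ_def]
    simp
  -- main local statement
  have main : ∀ x ∈ Ω, ∃ V : Set E,
      IsOpen V ∧ x ∈ V ∧ V ⊆ Ω ∧ Set.InjOn Ψ V ∧
      IsOpen {p : sphere (0 : E) 1 × ℝ | ((p.1 : E), p.2) ∈ Ψ '' V} ∧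
      ∃ ψ : E × ℝ → E, ContDiffOn ℝ 1 ψ (Ψ '' V) ∧ ∀ y ∈ V, ψ (Ψ y) = y := by
    intro x hx
    have hxU : x ∈ U := hΩU hx
    obtain ⟨u, hu⟩ := (hmem_iff x hxU).mp hx
    set eA : (E × ℝ) ≃L[ℝ] (E × ℝ) := ContinuousLinearEquiv.unitsEquiv ℝ (E × ℝ) u with heA_def
    have heA : (eA : (E × ℝ) →L[ℝ] (E × ℝ)) = A x := by
      apply ContinuousLinearMap.ext
      intro v
      rw [heA_def]
      show (ContinuousLinearEquiv.unitsEquiv ℝ (E × ℝ) u) v = A x v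
      rw [ContinuousLinearEquiv.unitsEquiv_apply, hu]
    have hΦc : ContDiffAt ℝ 1 Φ (x, (0:ℝ)) :=
      hΦ_cd.contDiffAt (hUuniv.mem_nhds ⟨hxU, mem_univ _⟩)
    have hΦd : HasFDerivAt Φ ((eA : (E × ℝ) →L[ℝ] (E × ℝ))) (x, (0:ℝ)) := by
      rw [heA]; exact hΦderiv x hxU
    set h := hΦc.toOpenPartialHomeomorph Φ hΦd one_ne_zero with hh_def
    have hcoe : (h : E × ℝ → E × ℝ) = Φ := hΦc.toOpenPartialHomeomorph_coe hΦd one_ne_zero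
    have hmem_src : (x, (0:ℝ)) ∈ h.source := hΦc.mem_toOpenPartialHomeomorph_source hΦd one_ne_zero
    have hmem_tgt : Φ (x, (0:ℝ)) ∈ h.target := hΦc.image_mem_toOpenPartialHomeomorph_target hΦd one_ne_zero
    have hsymm_eq : (h.symm : E × ℝ → E × ℝ) = hΦc.localInverse hΦd one_ne_zero := rfl
    obtain ⟨W, hWnhds, hWcd⟩ :=
      (hΦc.to_localInverse hΦd one_ne_zero).contDiffOn le_rfl (by simp)
    obtain ⟨W', hW'sub, hW'open, hW'mem⟩ := _root_.mem_nhds_iff.mp hWnhds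
    -- the target open set
    set T : Set (E × ℝ) :=
      (h.target ∩ (h.symm) ⁻¹' (Ω ×ˢ Ioi (-1 : ℝ))) ∩ W' with hT_def
    have hT_open : IsOpen T := by
      apply IsOpen.inter _ hW'open
      exact h.symm.continuousOn.isOpen_inter_preimage h.open_target (hΩ_open.prod isOpen_Ioi)
    have hsymm_img : h.symm (Φ (x, (0:ℝ))) = (x, (0:ℝ)) := by
      rw [← hcoe]; exact h.left_inv hmem_src
    have hΨxT : Φ (x, (0:ℝ)) ∈ T := by
      refine ⟨⟨hmem_tgt, ?_⟩, hW'mem⟩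
      rw [mem_preimage, hsymm_img]
      exact ⟨hx, by norm_num⟩
    -- the set V
    set S1 : Set E := (fun y => ((y, (0:ℝ)) : E × ℝ)) ⁻¹' h.source with hS1_def
    have hS1_open : IsOpen S1 := h.open_source.preimage (continuous_id.prodMk continuous_const)
    set V : Set E := (S1 ∩ Ω) ∩ (fun y => Φ (y, (0:ℝ))) ⁻¹' T with hV_def
    have hΦ0_cont : ContinuousOn (fun y => Φ (y, (0:ℝ))) (S1 ∩ Ω) := by
      intro y hy
      have : ContinuousAt (fun y => Φ (y, (0:ℝ))) y := by
        have h1 : ContDiffAt ℝ 1 (fun y : E => Φ (y, (0:ℝ))) y :=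
          (hΦ_cd.contDiffAt (hUuniv.mem_nhds ⟨hΩU hy.2, mem_univ _⟩)).comp y
            (contDiffAt_id.prodMk contDiffAt_const)
        exact h1.continuousAt
      exact this.continuousWithinAt
    have hV_open : IsOpen V :=
      hΦ0_cont.isOpen_inter_preimage (hS1_open.inter hΩ_open) hT_open
    have hxV : x ∈ V := ⟨⟨hmem_src, hx⟩, hΨxT⟩
    have hVΩ : V ⊆ Ω := fun y hy => hy.1.2
    -- injectivity
    have hinjV : Set.InjOn Ψ V := by
      intro y1 hy1 y2 hy2 hΨeq
      have h1 : Φ (y1, (0:ℝ)) = Φ (y2, (0:ℝ)) := by rw [← hΨΦ, ← hΨΦ, hΨeq]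
      have h2 := h.injOn hy1.1.1 hy2.1.1 (by rw [hcoe]; exact h1)
      exact congrArg Prod.fst h2
    -- image of V inside T and the sphere characterization
    have hΨV_sub_T : Ψ '' V ⊆ T := by
      rintro p ⟨y, hyV, rfl⟩
      rw [hΨΦ]
      exact hyV.2
    have him_eq : {p : sphere (0 : E) 1 × ℝ | ((p.1 : E), p.2) ∈ Ψ '' V}
        = (fun p : sphere (0 : E) 1 × ℝ => ((p.1 : E), p.2)) ⁻¹' T := by
      ext p
      constructor
      · intro hp
        exact hΨV_sub_T hp
      · intro hp
        obtain ⟨⟨hpt, hpre⟩, hpW⟩ := hp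
        set q := h.symm ((p.1 : E), p.2) with hq_def
        have hq_src : q ∈ h.source := h.map_target hpt
        have hq_img : Φ q = ((p.1 : E), p.2) := by rw [← hcoe]; exact h.right_inv hpt
        rw [mem_preimage] at hpre
        obtain ⟨hq1Ω, hq2⟩ := hpre
        have hq1U : q.1 ∈ U := hΩU hq1Ω
        have hnorm1 : ‖(p.1 : E)‖ = 1 := mem_sphere_zero_iff_norm.mp p.1.2
        have hnorm2 : ‖((1 + q.2) • ν q.1 : E)‖ = |1 + q.2| := by
          rw [norm_smul, hν_norm q.1 hq1U, Real.norm_eq_abs, mul_one]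
        have habs : |1 + q.2| = 1 := by
          rw [← hnorm2]
          have : ((1 + q.2) • ν q.1 : E) = (p.1 : E) := congrArg Prod.fst hq_img
          rw [this, hnorm1]
        have hq2pos : 0 < 1 + q.2 := by
          have := hq2
          simp only [mem_Ioi] at this
          linarith
        have hq20 : q.2 = 0 := by
          rw [abs_of_pos hq2pos] at habs
          linarith
        have hqeq : q = (q.1, (0:ℝ)) := by rw [← hq20]
        refine ⟨q.1, ⟨⟨?_, hq1Ω⟩, ?_⟩, ?_⟩
        · show (q.1, (0:ℝ)) ∈ h.source
          rw [← hqeq]; exact hq_src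
        · show Φ (q.1, (0:ℝ)) ∈ T
          rw [← hqeq, hq_img]
          exact ⟨⟨hpt, by rw [mem_preimage, ← hq_def]; exact ⟨hq1Ω, hq2⟩⟩, hpW⟩
        · rw [hΨΦ, ← hqeq, hq_img]
      
    have him_open : IsOpen {p : sphere (0 : E) 1 × ℝ | ((p.1 : E), p.2) ∈ Ψ '' V} := by
      rw [him_eq]
      exact hT_open.preimage ((continuous_subtype_val.comp continuous_fst).prodMk continuous_snd)
    -- the local inverse
    refine ⟨V, hV_open, hxV, hVΩ, hinjV, him_open, fun p => (h.symm p).1, ?_, ?_⟩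
    · have hsub : Ψ '' V ⊆ W := fun p hp => hW'sub (hΨV_sub_T hp).2
      have hcd : ContDiffOn ℝ 1 (h.symm : E × ℝ → E × ℝ) W := by
        rw [hsymm_eq]; exact hWcd
      exact (contDiff_fst.comp_contDiffOn (hcd.mono hsub))
    · intro y hyV
      have : h.symm (Ψ y) = (y, (0:ℝ)) := by
        rw [hΨΦ, ← hcoe]
        exact h.left_inv hyV.1.1
      show ((h.symm : E × ℝ → E × ℝ) (Ψ y)).1 = y
      rw [this]

  refine ⟨hΩ_open, main, ?_⟩
  -- global openness
  choose V hVopen hxV hVΩ hVinj hVim hVinv using main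
  have heq : {p : sphere (0 : E) 1 × ℝ | ((p.1 : E), p.2) ∈ Ψ '' Ω}
      = ⋃ (x : E) (hx : x ∈ Ω), {p : sphere (0 : E) 1 × ℝ | ((p.1 : E), p.2) ∈ Ψ '' (V x hx)} := by
    ext p
    simp only [mem_setOf_eq, mem_iUnion]
    constructor
    · rintro ⟨y, hy, hyp⟩
      exact ⟨y, hy, ⟨y, hxV y hy, hyp⟩⟩
    · rintro ⟨x, hx, y, hyV, hyp⟩
      exact ⟨y, hVΩ x hx hyV, hyp⟩
  rw [heq]
  exact isOpen_iUnion fun x => isOpen_iUnion fun hx => hVim x hx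

end Aux

/-- Let `f : ℝⁿ → ℝ` be `C²` and `Ω` the open set of regular points
`x` of `f` at which the Weingarten map `d_xν_f|_{T_x f⁻¹(f x)}` (the restriction of the
differential of the Gauss map `ν_f = ∇f/‖∇f‖` to the hyperplane `(∇f x)^⊥`) is
invertible.  Define `Ψ_f : Ω → S^{n-1} × ℝ` by `Ψ_f x = (ν_f x, f x)`.  Then `Ψ_f` is a
local diffeomorphism at every point of `Ω` (locally injective with open image in
`S^{n-1} × ℝ` and a `C¹` local inverse); in particular `Ψ_f(Ω)` is open in
`S^{n-1} × ℝ`. -/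
theorem statement6
    (n : ℕ) (f : EuclideanSpace ℝ (Fin n) → ℝ)
    (hf : ContDiff ℝ 2 f)
    (ν : EuclideanSpace ℝ (Fin n) → EuclideanSpace ℝ (Fin n))
    (hν : ∀ y, ν y = ‖gradient f y‖⁻¹ • gradient f y)
    (Ψ : EuclideanSpace ℝ (Fin n) → (EuclideanSpace ℝ (Fin n)) × ℝ)
    (hΨ : ∀ y, Ψ y = (ν y, f y))
    (Ω : Set (EuclideanSpace ℝ (Fin n)))
    (hΩ : Ω = {x | gradient f x ≠ 0 ∧
      ∀ ξ : EuclideanSpace ℝ (Fin n),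
        ⟪ξ, gradient f x⟫ = 0 → (fderiv ℝ ν x) ξ = 0 → ξ = 0}) :
    IsOpen Ω ∧
    (∀ x ∈ Ω, ∃ V : Set (EuclideanSpace ℝ (Fin n)),
      IsOpen V ∧ x ∈ V ∧ V ⊆ Ω ∧ Set.InjOn Ψ V ∧
      -- the image of `V` is open in `S^{n-1} × ℝ`
      IsOpen {p : sphere (0 : EuclideanSpace ℝ (Fin n)) 1 × ℝ |
        ((p.1 : EuclideanSpace ℝ (Fin n)), p.2) ∈ Ψ '' V} ∧
      -- with a `C¹` local inverse
      ∃ ψ : (EuclideanSpace ℝ (Fin n)) × ℝ → EuclideanSpace ℝ (Fin n),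
        ContDiffOn ℝ 1 ψ (Ψ '' V) ∧ ∀ y ∈ V, ψ (Ψ y) = y) ∧
    -- in particular `Ψ_f(Ω)` is open in `S^{n-1} × ℝ`
    IsOpen {p : sphere (0 : EuclideanSpace ℝ (Fin n)) 1 × ℝ |
      ((p.1 : EuclideanSpace ℝ (Fin n)), p.2) ∈ Ψ '' Ω} := by
  exact aux_main f hf ν hν Ψ hΨ Ω hΩ
end

section
/- Let f : ℝⁿ → ℝ be C², x a regular point of f at which the Weingarten map of the level set is invertible, t = f(x), u = ν_f(x). Choose a C¹ direct orthonormal frame (v₁,…,v_{n−1}, ν_f) near x. Then the determinant of the matrix of d_xΨ_f (where Ψ_f = (ν_f, f)) in this frame and the determinant of the matrix of the Weingarten map d_xν_t : T_xF_t → T_uS^{n−1} in the frame (v₁,…,v_{n−1}) have the same sign. Consequently the local degree of Ψ_f at (u,t) equals the local degree of ν_t at u. -/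
open scoped RealInnerProductSpace
open Set

/-- Let `f : ℝ^{n+1} → ℝ` be `C²`, `x` a regular point of `f` at which
the Weingarten map of the level set `F_t` (`t = f x`) is invertible, and `u = ν_f x`
with `ν_f = ∇f/‖∇f‖`.  Choose a direct orthonormal frame `(v_0, …, v_{n-1}, ν_f x)`
of `ℝ^{n+1}` (direct: positive determinant in the standard basis).  Let `A` be the
matrix of `d_xΨ_f` (where `Ψ_f = (ν_f, f)`) in this frame — rows `0,…,n-1` are the
components of `d_xν_f` on the tangent frame, the last row is `d_xf` — and let `B` be
the matrix of the Weingarten map `d_xν_t : T_xF_t → T_uS^n` in the frame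
`(v_0, …, v_{n-1})`.  Then `det A` and `det B` have the same sign, i.e.
`det A · det B > 0`; consequently the local degree of `Ψ_f` at `(u, t)` equals the
local degree of `ν_t` at `u` (both being the sign of the Jacobian determinant). -/
theorem statement7
    (n : ℕ) (f : EuclideanSpace ℝ (Fin (n + 1)) → ℝ)
    (hf : ContDiff ℝ 2 f)
    (ν : EuclideanSpace ℝ (Fin (n + 1)) → EuclideanSpace ℝ (Fin (n + 1)))
    (hν : ∀ y, ν y = ‖gradient f y‖⁻¹ • gradient f y)
    (x : EuclideanSpace ℝ (Fin (n + 1))) (hx : gradient f x ≠ 0)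
    -- invertibility of the Weingarten map on `T_xF_t = (∇f x)^⊥`:
    (hW : ∀ ξ : EuclideanSpace ℝ (Fin (n + 1)),
      ⟪ξ, gradient f x⟫ = 0 → (fderiv ℝ ν x) ξ = 0 → ξ = 0)
    -- a direct orthonormal frame `(v_0, …, v_{n-1}, v_n = ν_f x)`:
    (v : Fin (n + 1) → EuclideanSpace ℝ (Fin (n + 1)))
    (hvON : Orthonormal ℝ v)
    (hvlast : v (Fin.last n) = ν x)
    (hdirect : 0 < (Matrix.of fun i j : Fin (n + 1) => v j i).det)
    -- the matrix of `d_xΨ_f` in the frame: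
    (A : Matrix (Fin (n + 1)) (Fin (n + 1)) ℝ)
    (hA : ∀ i j, A i j =
      if (i : ℕ) < n then ⟪(fderiv ℝ ν x) (v j), v i⟫ else (fderiv ℝ f x) (v j))
    -- the matrix of the Weingarten map `d_xν_t` in the tangent frame:
    (B : Matrix (Fin n) (Fin n) ℝ)
    (hB : ∀ i j, B i j = ⟪(fderiv ℝ ν x) (v j.castSucc), v i.castSucc⟫) :
    0 < A.det * B.det := by
  classical
  have hEfr : Module.finrank ℝ (EuclideanSpace ℝ (Fin (n + 1))) = n + 1 := by
    simp [finrank_euclideanSpace]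
  set g := gradient f with hgdef
  -- the gradient is C¹ hence differentiable and continuous
  have hfd : ContDiff ℝ 1 (fderiv ℝ f) := hf.fderiv_right (by norm_num)
  have hgC : ContDiff ℝ 1 g := by
    have : g = fun y => (InnerProductSpace.toDual ℝ (EuclideanSpace ℝ (Fin (n + 1)))).symm (fderiv ℝ f y) := rfl
    rw [this]
    exact (InnerProductSpace.toDual ℝ (EuclideanSpace ℝ (Fin (n + 1)))).symm.toContinuousLinearEquiv.contDiff.comp hfd
  have hgd : DifferentiableAt ℝ g x := (hgC.differentiable one_ne_zero).differentiableAt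
  have hgcont : Continuous g := hgC.continuous
  have hgnorm : ‖g x‖ ≠ 0 := norm_ne_zero_iff.mpr hx
  -- differentiability of ν at x
  have hνeq : ν = fun y => ‖g y‖⁻¹ • g y := funext hν
  have hνd : DifferentiableAt ℝ ν x := by
    rw [hνeq]
    exact ((hgd.norm ℝ hx).inv hgnorm).smul hgd
  -- g x = ‖g x‖ • ν x, and ‖ν x‖ = 1
  have hgx : g x = ‖g x‖ • ν x := by
    rw [hν x, smul_smul, mul_inv_cancel₀ hgnorm, one_smul]
  -- fderiv of f in terms of the gradient
  have hdf : ∀ ξ : EuclideanSpace ℝ (Fin (n + 1)), fderiv ℝ f x ξ = ⟪g x, ξ⟫ := fun ξ =>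
    (InnerProductSpace.toDual_symm_apply).symm
  -- tangent derivative of ν is orthogonal to ν x
  have h1 : ∀ ξ : EuclideanSpace ℝ (Fin (n + 1)), ⟪(fderiv ℝ ν x) ξ, ν x⟫ = 0 := by
    intro ξ
    have heq : (fun y => ⟪ν y, ν y⟫) =ᶠ[nhds x] fun _ => (1 : ℝ) := by
      filter_upwards [hgcont.continuousAt.eventually_ne hx] with y hy
      have hny : ‖g y‖ ≠ 0 := norm_ne_zero_iff.mpr hy
      rw [hν y, real_inner_smul_left, real_inner_smul_right,
        real_inner_self_eq_norm_sq]
      field_simp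
    have hd0 : fderiv ℝ (fun y => ⟪ν y, ν y⟫) x = 0 := by
      rw [heq.fderiv_eq]; exact fderiv_const_apply 1
    have := fderiv_inner_apply ℝ hνd hνd ξ
    rw [hd0] at this
    simp only [ContinuousLinearMap.zero_apply] at this
    have h2 : (0 : ℝ) = 2 * ⟪(fderiv ℝ ν x) ξ, ν x⟫ := by
      rw [this, real_inner_comm (ν x)]; ring
    linarith
  -- the last row of A
  have hAlast : ∀ j : Fin (n + 1), A (Fin.last n) j =
      if j = Fin.last n then ‖g x‖ else 0 := by
    intro j
    rw [hA]
    simp only [Fin.val_last, lt_irrefl, if_false, lt_self_iff_false]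
    rw [hdf, hgx, real_inner_smul_left, ← hvlast]
    by_cases hj : j = Fin.last n
    · subst hj
      rw [if_pos rfl, real_inner_self_eq_norm_sq]
      simp [norm_smul, hvON.1]
    · rw [if_neg hj, hvON.2 (Ne.symm hj)]
      ring
  -- determinant of A via expansion along the last row
  have hsub : A.submatrix (Fin.last n).succAbove (Fin.last n).succAbove = B := by
    ext i j
    simp only [Matrix.submatrix_apply, Fin.succAbove_last]
    rw [hA, hB, if_pos]
    simpa using i.isLt
  have hAdet : A.det = ‖g x‖ * B.det := by
    rw [Matrix.det_succ_row A (Fin.last n)]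
    rw [Finset.sum_eq_single (Fin.last n)]
    · rw [hAlast, if_pos rfl, hsub]
      have : (-1 : ℝ) ^ ((Fin.last n : ℕ) + (Fin.last n : ℕ)) = 1 := by
        rw [Fin.val_last]
        exact Even.neg_one_pow ⟨n, rfl⟩
      rw [this, one_mul]
    · intro j _ hj
      rw [hAlast, if_neg hj]
      ring
    · intro h
      exact absurd (Finset.mem_univ _) h
  -- det B ≠ 0 from invertibility of the Weingarten map
  have hBdet : B.det ≠ 0 := by
    intro h0
    obtain ⟨c, hc0, hc⟩ := Matrix.exists_mulVec_eq_zero_iff.mpr h0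
    set ξ : EuclideanSpace ℝ (Fin (n + 1)) := ∑ j : Fin n, c j • v j.castSucc with hξdef
    -- ξ is tangent
    have hξperp : ⟪ξ, g x⟫ = 0 := by
      rw [hξdef, hgx, ← hvlast, sum_inner]
      refine Finset.sum_eq_zero fun j _ => ?_
      rw [real_inner_smul_left, real_inner_smul_right,
        hvON.2 (Fin.castSucc_lt_last j).ne]
      ring
    -- the derivative of ν kills ξ
    have hDξ : (fderiv ℝ ν x) ξ = ∑ j : Fin n, c j • (fderiv ℝ ν x) (v j.castSucc) := by
      rw [hξdef, map_sum]
      exact Finset.sum_congr rfl fun j _ => (fderiv ℝ ν x).map_smul _ _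
    have hbinner : ∀ i : Fin (n + 1), ⟪v i, (fderiv ℝ ν x) ξ⟫ = 0 := by
      intro i
      refine Fin.lastCases ?_ (fun i => ?_) i
      · rw [real_inner_comm, hvlast]; exact h1 ξ
      · rw [hDξ, inner_sum]
        have : ∀ j : Fin n, ⟪v i.castSucc, c j • (fderiv ℝ ν x) (v j.castSucc)⟫
            = B i j * c j := by
          intro j
          rw [real_inner_smul_right, hB, real_inner_comm]
          ring
        rw [Finset.sum_congr rfl fun j _ => this j]
        exact congrFun hc i
    -- v is an orthonormal basis, so the vector with zero coordinates is zero
    have hspan : ⊤ ≤ Submodule.span ℝ (Set.range v) := by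
      rw [hvON.linearIndependent.span_eq_top_of_card_eq_finrank
        (by simp [hEfr])]
    have hb : (fderiv ℝ ν x) ξ = 0 := by
      let b : OrthonormalBasis (Fin (n + 1)) ℝ (EuclideanSpace ℝ (Fin (n + 1))) := OrthonormalBasis.mk hvON hspan
      have hrepr := b.sum_repr' ((fderiv ℝ ν x) ξ)
      have hbv : ∀ i, b i = v i := fun i => by simp [b, OrthonormalBasis.coe_mk]
      rw [← hrepr]
      refine Finset.sum_eq_zero fun i _ => ?_
      rw [hbv i, hbinner i, zero_smul]
    have hξ0 : ξ = 0 := hW ξ hξperp hb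
    -- contradiction with linear independence
    have hli : LinearIndependent ℝ fun j : Fin n => v j.castSucc := by
      have := hvON.linearIndependent.comp Fin.castSucc (Fin.castSucc_injective n)
      exact this
    have : ∀ j, c j = 0 := Fintype.linearIndependent_iff.mp hli c (hξdef ▸ hξ0)
    exact hc0 (funext this)
  -- conclude
  rw [hAdet, mul_assoc]
  exact mul_pos (norm_pos_iff.mpr hx) (mul_self_pos.mpr hBdet)
end
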